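/- arXiv:2605.31414 — 2 statements merged into one kernel-verified Lean document; each statement's English description precedes it below -/
import Mathlib

section
/- Let d ≥ 1, S = {x ∈ ℝ^d : ‖x‖ = 1}, s(u,i) = ⟨u,i⟩, and fix τ > 0. On a probability space (Ω, ℱ, P), let (U, I) : Ω → S × S be a random positive pair, and let J₁, J₂, … : Ω → S be i.i.d. with common law ν and independent of (U, I). For M ≥ 1 define the InfoNCE loss L_CL(M) = −E[log( e^{s(U,I)/τ} / (e^{s(U,I)/τ} + Σ_{n=1}^M e^{s(U,J_n)/τ}) )], and define g(u) = ∫_S e^{s(u,j)/τ} dν(j). Then the normalized InfoNCE loss converges: lim_{M→∞} ( L_CL(M) − log M ) = −(1/τ) E[s(U,I)] + E[ log g(U) ]. -/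
open MeasureTheory ProbabilityTheory Real Filter Topology

private lemma aux_indep_transfer {α β Ω : Type*} [MeasurableSpace α] [MeasurableSpace β]
    [MeasurableSpace Ω] (P : Measure Ω) [IsProbabilityMeasure P]
    (X : Ω → α) (Y : Ω → β) (hX : Measurable X) (hY : Measurable Y)
    (hXY : IndepFun X Y P) {p : α × β → Prop} (hp : MeasurableSet {x | p x})
    (h : ∀ a, ∀ᵐ ω ∂P, p (a, Y ω)) : ∀ᵐ ω ∂P, p (X ω, Y ω) := by
  haveI : IsProbabilityMeasure (P.map X) := Measure.isProbabilityMeasure_map hX.aemeasurable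
  haveI : IsProbabilityMeasure (P.map Y) := Measure.isProbabilityMeasure_map hY.aemeasurable
  have hmapT : P.map (fun ω => (X ω, Y ω)) = (P.map X).prod (P.map Y) :=
    (indepFun_iff_map_prod_eq_prod_map_map hX.aemeasurable hY.aemeasurable).1 hXY
  have h1 : ∀ᵐ x ∂((P.map X).prod (P.map Y)), p x := by
    rw [Measure.ae_prod_iff_ae_ae hp]
    refine ae_of_all _ fun a => ?_
    have hsec : MeasurableSet {b : β | p (a, b)} :=
      hp.preimage (measurable_prodMk_left (x := a))
    rw [ae_map_iff hY.aemeasurable hsec]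
    exact h a
  rw [← hmapT] at h1
  exact (ae_map_iff (hX.aemeasurable.prodMk hY.aemeasurable) hp).1 h1

set_option maxHeartbeats 1000000 in
/-- Theorem 1 of the paper: the normalized InfoNCE loss L_CL(M) − log M
converges, as the number M of i.i.d. negative samples tends to infinity, to the
alignment term −(1/τ)E[s(U,I)] plus E[log g(U)], where g(u) = ∫ e^{s(u,j)/τ} dν(j). -/
theorem normalized_infoNCE_tendsto_alignment_uniformity
    (d : ℕ) (hd : 1 ≤ d) (τ : ℝ) (hτ : 0 < τ)
    {Ω : Type*} [MeasurableSpace Ω] (P : Measure Ω) [IsProbabilityMeasure P]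
    (U I : Ω → EuclideanSpace ℝ (Fin d)) (J : ℕ → Ω → EuclideanSpace ℝ (Fin d))
    (hUm : Measurable U) (hIm : Measurable I) (hJm : ∀ n, Measurable (J n))
    (hU : ∀ ω, ‖U ω‖ = 1) (hI : ∀ ω, ‖I ω‖ = 1) (hJ : ∀ n ω, ‖J n ω‖ = 1)
    (ν : Measure (EuclideanSpace ℝ (Fin d))) [IsProbabilityMeasure ν]
    (hlaw : ∀ n, P.map (J n) = ν)
    (hiid : iIndepFun J P)
    (hindep : IndepFun (fun ω => (U ω, I ω)) (fun ω => (fun n => J n ω)) P) :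
    Tendsto
      (fun M : ℕ =>
        -(∫ ω, log (exp ((inner ℝ (U ω) (I ω) : ℝ) / τ) /
            (exp ((inner ℝ (U ω) (I ω) : ℝ) / τ)
              + ∑ n ∈ Finset.range M, exp ((inner ℝ (U ω) (J n ω) : ℝ) / τ))) ∂P)
          - log M)
      atTop
      (nhds (-(1 / τ) * (∫ ω, (inner ℝ (U ω) (I ω) : ℝ) ∂P)
        + ∫ ω, log (∫ j, exp ((inner ℝ (U ω) j : ℝ) / τ) ∂ν) ∂P)) := by
  classical
  -- Notation
  have hτ' : τ ≠ 0 := ne_of_gt hτ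
  -- measurability of the similarity kernel
  have hfm : ∀ u : EuclideanSpace ℝ (Fin d),
      Measurable fun j : EuclideanSpace ℝ (Fin d) => exp ((inner ℝ u j : ℝ) / τ) :=
    fun u => ((measurable_const.inner measurable_id).div_const τ).exp
  -- a.e. over ν, points have norm one
  have hν1 : ∀ᵐ j ∂ν, ‖j‖ = 1 := by
    rw [← hlaw 0, ae_map_iff (hJm 0).aemeasurable
      (show MeasurableSet {j : EuclideanSpace ℝ (Fin d) | ‖j‖ = 1} from
        measurable_norm (measurableSet_singleton 1))]
    exact ae_of_all _ (hJ 0)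
  -- generic inner ℝ product bounds
  have hinner_le : ∀ (u j : EuclideanSpace ℝ (Fin d)), ‖u‖ = 1 → ‖j‖ = 1 →
      -1 ≤ (inner ℝ u j : ℝ) ∧ (inner ℝ u j : ℝ) ≤ 1 := by
    intro u j hu hj
    have := abs_real_inner_le_norm u j
    rw [hu, hj, mul_one] at this
    exact abs_le.1 this
  have hdivle : ∀ x y : ℝ, x ≤ y → x / τ ≤ y / τ := fun x y h => by
    exact div_le_div_of_nonneg_right h hτ.le
  -- integrability of the kernel in j
  have hf_int : ∀ u : EuclideanSpace ℝ (Fin d), ‖u‖ = 1 →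
      Integrable (fun j => exp ((inner ℝ u j : ℝ) / τ)) ν := by
    intro u hu
    refine (integrable_const (exp (1 / τ))).mono' (hfm u).aestronglyMeasurable ?_
    filter_upwards [hν1] with j hj
    rw [Real.norm_eq_abs, abs_of_pos (exp_pos _), Real.exp_le_exp]
    exact hdivle _ _ (hinner_le u j hu hj).2
  -- bounds for g
  have hg_lb : ∀ u : EuclideanSpace ℝ (Fin d), ‖u‖ = 1 →
      exp (-(1 / τ)) ≤ ∫ j, exp ((inner ℝ u j : ℝ) / τ) ∂ν := by
    intro u hu
    have h := integral_mono_ae (integrable_const (exp (-(1 / τ)))) (hf_int u hu) ?_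
    · simpa using h
    · filter_upwards [hν1] with j hj
      rw [Real.exp_le_exp]
      have := hdivle _ _ (hinner_le u j hu hj).1
      simpa [neg_div] using this
  have hg_ub : ∀ u : EuclideanSpace ℝ (Fin d), ‖u‖ = 1 →
      (∫ j, exp ((inner ℝ u j : ℝ) / τ) ∂ν) ≤ exp (1 / τ) := by
    intro u hu
    have h := integral_mono_ae (hf_int u hu) (integrable_const (exp (1 / τ))) ?_
    · simpa using h
    · filter_upwards [hν1] with j hj
      rw [Real.exp_le_exp]
      exact hdivle _ _ (hinner_le u j hu hj).2
  -- measurability of g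
  have hgm : Measurable fun u : EuclideanSpace ℝ (Fin d) =>
      ∫ j, exp ((inner ℝ u j : ℝ) / τ) ∂ν := by
    have hc : Continuous fun p : EuclideanSpace ℝ (Fin d) × EuclideanSpace ℝ (Fin d) =>
        exp ((inner ℝ p.1 p.2 : ℝ) / τ) :=
      Real.continuous_exp.comp
        ((continuous_inner : Continuous fun p : EuclideanSpace ℝ (Fin d) ×
          EuclideanSpace ℝ (Fin d) => (inner ℝ p.1 p.2 : ℝ)).div_const τ)
    exact hc.stronglyMeasurable.integral_prod_right'.measurable
  -- IdentDistrib of the J n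
  have hJ_id : ∀ n, IdentDistrib (J n) (J 0) P P := fun n =>
    ⟨(hJm n).aemeasurable, (hJm 0).aemeasurable, by rw [hlaw n, hlaw 0]⟩
  -- SLLN for each fixed u
  have hSLLN : ∀ u : EuclideanSpace ℝ (Fin d), ∀ᵐ ω ∂P,
      Tendsto (fun M : ℕ => (M : ℝ)⁻¹ •
          ∑ n ∈ Finset.range M, exp ((inner ℝ u (J n ω) : ℝ) / τ)) atTop
        (𝓝 (∫ j, exp ((inner ℝ u j : ℝ) / τ) ∂ν)) := by
    intro u
    have hident : ∀ n, IdentDistrib (fun ω => exp ((inner ℝ u (J n ω) : ℝ) / τ))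
        (fun ω => exp ((inner ℝ u (J 0 ω) : ℝ) / τ)) P P :=
      fun n => (hJ_id n).comp (hfm u)
    have hpind : Pairwise (Function.onFun (IndepFun · · P)
        fun n ω => exp ((inner ℝ u (J n ω) : ℝ) / τ)) := by
      intro i j hij
      exact (hiid.indepFun hij).comp (hfm u) (hfm u)
    have hint : Integrable (fun ω => exp ((inner ℝ u (J 0 ω) : ℝ) / τ)) P := by
      refine (integrable_const (exp (‖u‖ / τ))).mono'
        ((hfm u).comp (hJm 0)).aestronglyMeasurable ?_
      refine ae_of_all _ fun ω => ?_
      rw [Real.norm_eq_abs, abs_of_pos (exp_pos _), Real.exp_le_exp]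
      refine hdivle _ _ ?_
      have h := abs_real_inner_le_norm u (J 0 ω)
      rw [hJ 0 ω, mul_one] at h
      exact (abs_le.1 h).2
    have h := strong_law_ae _ hint hpind hident
    have hmean : ∫ ω, exp ((inner ℝ u (J 0 ω) : ℝ) / τ) ∂P
        = ∫ j, exp ((inner ℝ u j : ℝ) / τ) ∂ν := by
      rw [← hlaw 0, integral_map (hJm 0).aemeasurable (hfm u).aestronglyMeasurable]
    rwa [hmean] at h
  -- transfer SLLN to random u = U ω via independence
  set Jv : Ω → (ℕ → EuclideanSpace ℝ (Fin d)) := fun ω n => J n ω with hJv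
  have hJvm : Measurable Jv := measurable_pi_lambda _ hJm
  have hUJv : IndepFun U Jv P := by
    have h := hindep.comp (measurable_fst) (measurable_id)
    exact h
  have hpm : MeasurableSet {x : EuclideanSpace ℝ (Fin d) × (ℕ → EuclideanSpace ℝ (Fin d)) |
      Tendsto (fun M : ℕ => (M : ℝ)⁻¹ •
          ∑ n ∈ Finset.range M, exp ((inner ℝ x.1 (x.2 n) : ℝ) / τ)) atTop
        (𝓝 (∫ j, exp ((inner ℝ x.1 j : ℝ) / τ) ∂ν))} := by
    have hFm : ∀ M : ℕ, Measurable
        (fun x : EuclideanSpace ℝ (Fin d) × (ℕ → EuclideanSpace ℝ (Fin d)) =>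
          (M : ℝ)⁻¹ • ∑ n ∈ Finset.range M, exp ((inner ℝ x.1 (x.2 n) : ℝ) / τ)) := by
      intro M
      simp only [smul_eq_mul]
      refine measurable_const.mul <| Finset.measurable_sum _ fun n _ => ?_
      have h2 : Measurable fun x : EuclideanSpace ℝ (Fin d) ×
          (ℕ → EuclideanSpace ℝ (Fin d)) => x.2 n := measurable_snd.eval
      exact ((measurable_fst.inner h2).div_const τ).exp
    exact measurableSet_tendsto_fun hFm (hgm.comp measurable_fst)
  have hae : ∀ᵐ ω ∂P,
      Tendsto (fun M : ℕ => (M : ℝ)⁻¹ •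
          ∑ n ∈ Finset.range M, exp ((inner ℝ (U ω) (J n ω) : ℝ) / τ)) atTop
        (𝓝 (∫ j, exp ((inner ℝ (U ω) j : ℝ) / τ) ∂ν)) := by
    exact aux_indep_transfer P U Jv hUm hJvm hUJv hpm fun u => hSLLN u
  -- pointwise convergence of the normalized log terms
  have hSpos : ∀ (M : ℕ) (ω : Ω), 0 < exp ((inner ℝ (U ω) (I ω) : ℝ) / τ)
      + ∑ n ∈ Finset.range M, exp ((inner ℝ (U ω) (J n ω) : ℝ) / τ) := by
    intro M ω
    exact add_pos_of_pos_of_nonneg (exp_pos _)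
      (Finset.sum_nonneg fun n _ => (exp_pos _).le)
  have hptwise : ∀ᵐ ω ∂P,
      Tendsto (fun M : ℕ => log ((exp ((inner ℝ (U ω) (I ω) : ℝ) / τ)
          + ∑ n ∈ Finset.range M, exp ((inner ℝ (U ω) (J n ω) : ℝ) / τ)) / M)) atTop
        (𝓝 (log (∫ j, exp ((inner ℝ (U ω) j : ℝ) / τ) ∂ν))) := by
    filter_upwards [hae] with ω hω
    have hgpos : 0 < ∫ j, exp ((inner ℝ (U ω) j : ℝ) / τ) ∂ν :=
      lt_of_lt_of_le (exp_pos _) (hg_lb _ (hU ω))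
    have h0 : Tendsto (fun M : ℕ => exp ((inner ℝ (U ω) (I ω) : ℝ) / τ) / M) atTop (𝓝 0) :=
      tendsto_const_div_atTop_nhds_zero_nat _
    have h1 : Tendsto (fun M : ℕ => exp ((inner ℝ (U ω) (I ω) : ℝ) / τ) / M
        + (M : ℝ)⁻¹ • ∑ n ∈ Finset.range M, exp ((inner ℝ (U ω) (J n ω) : ℝ) / τ)) atTop
          (𝓝 (0 + ∫ j, exp ((inner ℝ (U ω) j : ℝ) / τ) ∂ν)) := h0.add hω
    rw [zero_add] at h1
    have h2 := ((Real.continuousAt_log hgpos.ne').tendsto).comp h1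
    refine h2.congr fun M => ?_
    simp only [Function.comp]
    congr 1
    rw [add_div, smul_eq_mul, inv_mul_eq_div]
  -- uniform bound for the normalized log terms
  have hbound : ∀ M : ℕ, 1 ≤ M → ∀ ω : Ω,
      |log ((exp ((inner ℝ (U ω) (I ω) : ℝ) / τ)
          + ∑ n ∈ Finset.range M, exp ((inner ℝ (U ω) (J n ω) : ℝ) / τ)) / M)|
        ≤ log 2 + 1 / τ := by
    intro M hM ω
    have hMpos : (0 : ℝ) < M := by exact_mod_cast hM
    set x : ℝ := (exp ((inner ℝ (U ω) (I ω) : ℝ) / τ)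
        + ∑ n ∈ Finset.range M, exp ((inner ℝ (U ω) (J n ω) : ℝ) / τ)) / M with hx
    have hxlb : exp (-(1 / τ)) ≤ x := by
      rw [hx, le_div_iff₀ hMpos]
      have hterm : ∀ n ∈ Finset.range M,
          exp (-(1 / τ)) ≤ exp ((inner ℝ (U ω) (J n ω) : ℝ) / τ) := by
        intro n _
        rw [Real.exp_le_exp]
        have := hdivle _ _ (hinner_le (U ω) (J n ω) (hU ω) (hJ n ω)).1
        simpa [neg_div] using this
      calc exp (-(1 / τ)) * M = ∑ _n ∈ Finset.range M, exp (-(1 / τ)) := by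
            rw [Finset.sum_const, Finset.card_range, nsmul_eq_mul, mul_comm]
        _ ≤ ∑ n ∈ Finset.range M, exp ((inner ℝ (U ω) (J n ω) : ℝ) / τ) :=
            Finset.sum_le_sum hterm
        _ ≤ _ := le_add_of_nonneg_left (exp_pos _).le
    have hxub : x ≤ 2 * exp (1 / τ) := by
      rw [hx, div_le_iff₀ hMpos]
      have hterm : ∀ n ∈ Finset.range M,
          exp ((inner ℝ (U ω) (J n ω) : ℝ) / τ) ≤ exp (1 / τ) := by
        intro n _
        rw [Real.exp_le_exp]
        exact hdivle _ _ (hinner_le (U ω) (J n ω) (hU ω) (hJ n ω)).2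
      have h1 : exp ((inner ℝ (U ω) (I ω) : ℝ) / τ) ≤ exp (1 / τ) := by
        rw [Real.exp_le_exp]
        exact hdivle _ _ (hinner_le (U ω) (I ω) (hU ω) (hI ω)).2
      have h2 : ∑ n ∈ Finset.range M, exp ((inner ℝ (U ω) (J n ω) : ℝ) / τ)
          ≤ M * exp (1 / τ) := by
        calc ∑ n ∈ Finset.range M, exp ((inner ℝ (U ω) (J n ω) : ℝ) / τ)
            ≤ ∑ _n ∈ Finset.range M, exp (1 / τ) := Finset.sum_le_sum hterm
          _ = M * exp (1 / τ) := by
            rw [Finset.sum_const, Finset.card_range, nsmul_eq_mul]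
      have hM1 : (1 : ℝ) ≤ M := by exact_mod_cast hM
      nlinarith [exp_pos (1 / τ), mul_le_mul_of_nonneg_left h1 (le_of_lt hMpos)]
    have hxpos : 0 < x := lt_of_lt_of_le (exp_pos _) hxlb
    rw [abs_le]
    constructor
    · have := Real.log_le_log (exp_pos _) hxlb
      rw [Real.log_exp] at this
      have hlog2 : (0 : ℝ) ≤ log 2 := Real.log_nonneg one_le_two
      linarith
    · have := Real.log_le_log hxpos hxub
      rw [Real.log_mul (by norm_num) (exp_ne_zero _), Real.log_exp] at this
      linarith
  -- measurability in ω
  have hmeasW : ∀ M : ℕ, Measurable fun ω =>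
      exp ((inner ℝ (U ω) (I ω) : ℝ) / τ)
        + ∑ n ∈ Finset.range M, exp ((inner ℝ (U ω) (J n ω) : ℝ) / τ) := by
    intro M
    refine Measurable.add ?_ ?_
    · exact (((hUm.inner hIm)).div_const τ).exp
    · exact Finset.measurable_sum _ fun n _ => (((hUm.inner (hJm n))).div_const τ).exp
  -- dominated convergence
  have hTend : Tendsto (fun M : ℕ => ∫ ω, log ((exp ((inner ℝ (U ω) (I ω) : ℝ) / τ)
        + ∑ n ∈ Finset.range M, exp ((inner ℝ (U ω) (J n ω) : ℝ) / τ)) / M) ∂P) atTop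
      (𝓝 (∫ ω, log (∫ j, exp ((inner ℝ (U ω) j : ℝ) / τ) ∂ν) ∂P)) := by
    refine tendsto_integral_filter_of_dominated_convergence
      (fun _ => log 2 + 1 / τ) ?_ ?_ (integrable_const _) hptwise
    · refine Eventually.of_forall fun M => ?_
      exact (((hmeasW M).div_const M).log).aestronglyMeasurable
    · filter_upwards [eventually_ge_atTop 1] with M hM
      exact ae_of_all _ fun ω => by
        simpa [Real.norm_eq_abs] using hbound M hM ω
  -- integrability facts for the algebraic rewriting
  have hint_inner : Integrable (fun ω => (inner ℝ (U ω) (I ω) : ℝ)) P := by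
    refine (integrable_const (1 : ℝ)).mono' (hUm.inner hIm).aestronglyMeasurable ?_
    refine ae_of_all _ fun ω => ?_
    have h := abs_real_inner_le_norm (U ω) (I ω)
    rw [hU ω, hI ω, mul_one] at h
    simpa [Real.norm_eq_abs] using h
  have hint_a : Integrable (fun ω => (inner ℝ (U ω) (I ω) : ℝ) / τ) P := hint_inner.div_const τ
  have hint_log : ∀ M : ℕ, Integrable (fun ω =>
      log (exp ((inner ℝ (U ω) (I ω) : ℝ) / τ)
        + ∑ n ∈ Finset.range M, exp ((inner ℝ (U ω) (J n ω) : ℝ) / τ))) P := by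
    intro M
    refine (integrable_const (log (M + 1) + 1 / τ)).mono'
      ((hmeasW M).log).aestronglyMeasurable ?_
    refine ae_of_all _ fun ω => ?_
    set y : ℝ := exp ((inner ℝ (U ω) (I ω) : ℝ) / τ)
        + ∑ n ∈ Finset.range M, exp ((inner ℝ (U ω) (J n ω) : ℝ) / τ) with hy
    have hypos : 0 < y := hSpos M ω
    have hylb : exp (-(1 / τ)) ≤ y := by
      rw [hy]
      refine le_add_of_le_of_nonneg ?_ (Finset.sum_nonneg fun n _ => (exp_pos _).le)
      rw [Real.exp_le_exp]
      have := hdivle _ _ (hinner_le (U ω) (I ω) (hU ω) (hI ω)).1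
      simpa [neg_div] using this
    have hyub : y ≤ (M + 1) * exp (1 / τ) := by
      rw [hy]
      have h1 : exp ((inner ℝ (U ω) (I ω) : ℝ) / τ) ≤ exp (1 / τ) := by
        rw [Real.exp_le_exp]
        exact hdivle _ _ (hinner_le (U ω) (I ω) (hU ω) (hI ω)).2
      have h2 : ∑ n ∈ Finset.range M, exp ((inner ℝ (U ω) (J n ω) : ℝ) / τ)
          ≤ M * exp (1 / τ) := by
        calc ∑ n ∈ Finset.range M, exp ((inner ℝ (U ω) (J n ω) : ℝ) / τ)
            ≤ ∑ _n ∈ Finset.range M, exp (1 / τ) := by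
              refine Finset.sum_le_sum fun n _ => ?_
              rw [Real.exp_le_exp]
              exact hdivle _ _ (hinner_le (U ω) (J n ω) (hU ω) (hJ n ω)).2
          _ = M * exp (1 / τ) := by
            rw [Finset.sum_const, Finset.card_range, nsmul_eq_mul]
      nlinarith [exp_pos (1 / τ)]
    rw [Real.norm_eq_abs, abs_le]
    have hlogM1 : (0 : ℝ) ≤ log (M + 1) := by
      refine Real.log_nonneg ?_
      have : (0 : ℝ) ≤ (M : ℝ) := Nat.cast_nonneg M
      linarith
    constructor
    · have h := Real.log_le_log (exp_pos _) hylb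
      rw [Real.log_exp] at h
      linarith
    · have h := Real.log_le_log hypos hyub
      have hM1pos : (0 : ℝ) < (M : ℝ) + 1 := by positivity
      rw [Real.log_mul (ne_of_gt hM1pos) (exp_ne_zero _), Real.log_exp] at h
      linarith
  -- key algebraic identity for M ≥ 1
  have key : ∀ M : ℕ, 1 ≤ M →
      -(∫ ω, log (exp ((inner ℝ (U ω) (I ω) : ℝ) / τ) /
            (exp ((inner ℝ (U ω) (I ω) : ℝ) / τ)
              + ∑ n ∈ Finset.range M, exp ((inner ℝ (U ω) (J n ω) : ℝ) / τ))) ∂P)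
          - log M
        = (∫ ω, log ((exp ((inner ℝ (U ω) (I ω) : ℝ) / τ)
              + ∑ n ∈ Finset.range M, exp ((inner ℝ (U ω) (J n ω) : ℝ) / τ)) / M) ∂P)
          - (1 / τ) * (∫ ω, (inner ℝ (U ω) (I ω) : ℝ) ∂P) := by
    intro M hM
    have hMne : (M : ℝ) ≠ 0 := by
      exact Nat.cast_ne_zero.mpr (by omega)
    have e1 : (∫ ω, log (exp ((inner ℝ (U ω) (I ω) : ℝ) / τ) /
            (exp ((inner ℝ (U ω) (I ω) : ℝ) / τ)
              + ∑ n ∈ Finset.range M, exp ((inner ℝ (U ω) (J n ω) : ℝ) / τ))) ∂P)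
        = (∫ ω, (inner ℝ (U ω) (I ω) : ℝ) / τ ∂P)
          - ∫ ω, log (exp ((inner ℝ (U ω) (I ω) : ℝ) / τ)
              + ∑ n ∈ Finset.range M, exp ((inner ℝ (U ω) (J n ω) : ℝ) / τ)) ∂P := by
      rw [← integral_sub hint_a (hint_log M)]
      refine integral_congr_ae (ae_of_all _ fun ω => ?_)
      beta_reduce
      rw [Real.log_div (exp_ne_zero _) (hSpos M ω).ne', Real.log_exp]
    have e2 : (∫ ω, log ((exp ((inner ℝ (U ω) (I ω) : ℝ) / τ)
              + ∑ n ∈ Finset.range M, exp ((inner ℝ (U ω) (J n ω) : ℝ) / τ)) / M) ∂P)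
        = (∫ ω, log (exp ((inner ℝ (U ω) (I ω) : ℝ) / τ)
              + ∑ n ∈ Finset.range M, exp ((inner ℝ (U ω) (J n ω) : ℝ) / τ)) ∂P) - log M := by
      have : ∀ ω : Ω, log ((exp ((inner ℝ (U ω) (I ω) : ℝ) / τ)
              + ∑ n ∈ Finset.range M, exp ((inner ℝ (U ω) (J n ω) : ℝ) / τ)) / M)
          = log (exp ((inner ℝ (U ω) (I ω) : ℝ) / τ)
              + ∑ n ∈ Finset.range M, exp ((inner ℝ (U ω) (J n ω) : ℝ) / τ)) - log M :=
        fun ω => Real.log_div (hSpos M ω).ne' hMne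
      rw [integral_congr_ae (ae_of_all _ this),
        integral_sub (hint_log M) (integrable_const _), integral_const]
      simp
    have e3 : (∫ ω, (inner ℝ (U ω) (I ω) : ℝ) / τ ∂P)
        = (1 / τ) * (∫ ω, (inner ℝ (U ω) (I ω) : ℝ) ∂P) := by
      rw [integral_div, one_div, inv_mul_eq_div]
    rw [e1, e2, e3]
    ring
  -- conclusion
  have hfinal := hTend.sub_const ((1 / τ) * (∫ ω, (inner ℝ (U ω) (I ω) : ℝ) ∂P))
  have hlim_eq : -(1 / τ) * (∫ ω, (inner ℝ (U ω) (I ω) : ℝ) ∂P)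
        + ∫ ω, log (∫ j, exp ((inner ℝ (U ω) j : ℝ) / τ) ∂ν) ∂P
      = (∫ ω, log (∫ j, exp ((inner ℝ (U ω) j : ℝ) / τ) ∂ν) ∂P)
        - (1 / τ) * (∫ ω, (inner ℝ (U ω) (I ω) : ℝ) ∂P) := by ring
  rw [hlim_eq]
  refine Tendsto.congr' ?_ hfinal
  filter_upwards [eventually_ge_atTop 1] with M hM
  exact (key M hM).symm
end

section
/- Let d ≥ 1, S = {x ∈ ℝ^d : ‖x‖ = 1}, s(u,i) = ⟨u,i⟩, and fix τ > 0. On a probability space (Ω, ℱ, P), let (U, I) : Ω → S × S be a random positive pair, and let J₁, J₂, … : Ω → S be i.i.d. with common law ν and independent of (U, I). For M ≥ 1 define the normalized InfoNCE loss L̃(M) = −E[log( e^{s(U,I)/τ} / (e^{s(U,I)/τ} + Σ_{n=1}^M e^{s(U,J_n)/τ}) )] − log M, and let L̃(∞) = −(1/τ) E[s(U,I)] + E[log g(U)] where g(u) = ∫_S e^{s(u,j)/τ} dν(j). Then for every M ≥ 1: | L̃(∞) − L̃(M) | ≤ (1/M) e^{2/τ} + e^{1/τ} (e^{1/τ} −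 e^{−1/τ}) / (2√M). -/
open MeasureTheory ProbabilityTheory Real

lemma myIntegrable {α : Type*} [MeasurableSpace α] {μ : Measure α} [IsFiniteMeasure μ]
    {f : α → ℝ} (hf : AEStronglyMeasurable f μ) {C : ℝ} (h : ∀ᵐ x ∂μ, |f x| ≤ C) :
    Integrable f μ :=
  (integrable_const C).mono' hf (by simpa using h)

lemma abs_log_sub_log_le {ε p q : ℝ} (hε : 0 < ε) (hp : ε ≤ p) (hq : ε ≤ q) :
    |Real.log p - Real.log q| ≤ |p - q| / ε := by
  have key : ∀ x y : ℝ, ε ≤ x → ε ≤ y → Real.log x - Real.log y ≤ |x - y| / ε := by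
    intro x y hx hy
    have hy0 : 0 < y := lt_of_lt_of_le hε hy
    have hx0 : 0 < x := lt_of_lt_of_le hε hx
    have h2 := Real.log_le_sub_one_of_pos (div_pos hx0 hy0)
    rw [Real.log_div hx0.ne' hy0.ne'] at h2
    calc Real.log x - Real.log y ≤ x / y - 1 := h2
      _ = (x - y) / y := by field_simp
      _ ≤ |x - y| / y := by gcongr; exact le_abs_self _
      _ ≤ |x - y| / ε := by gcongr
  exact abs_sub_le_iff.mpr ⟨key p q hp hq, by simpa [abs_sub_comm] using key q p hq hp⟩

lemma popoviciu {α : Type*} [MeasurableSpace α] (μ : Measure α) [IsProbabilityMeasure μ]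
    {f : α → ℝ} (hf : AEStronglyMeasurable f μ) {a b : ℝ}
    (h : ∀ᵐ x ∂μ, f x ∈ Set.Icc a b) :
    ∫ x, (f x - ∫ y, f y ∂μ) ^ 2 ∂μ ≤ ((b - a) / 2) ^ 2 := by
  set m := ∫ y, f y ∂μ with hm
  have habs : ∀ᵐ x ∂μ, |f x| ≤ max |a| |b| := by
    filter_upwards [h] with x hx
    exact abs_le_max_abs_abs hx.1 hx.2
  have hif : Integrable f μ := myIntegrable hf habs
  have hift : Integrable (fun x => (f x - (a + b) / 2) ^ 2) μ := by
    apply myIntegrable ((hf.sub aestronglyMeasurable_const).pow 2)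
      (C := (max |a| |b| + |(a + b) / 2|) ^ 2)
    filter_upwards [habs] with x hx
    have h3 : |f x - (a + b) / 2| ≤ max |a| |b| + |(a + b) / 2| :=
      (abs_sub _ _).trans (by gcongr)
    calc |(f x - (a + b) / 2) ^ 2| = |f x - (a + b) / 2| ^ 2 := abs_pow _ _
      _ ≤ (max |a| |b| + |(a + b) / 2|) ^ 2 := pow_le_pow_left₀ (abs_nonneg _) h3 2
  have hsub : Integrable (fun x => f x - (a + b) / 2) μ := hif.sub (integrable_const _)
  have h1 : Integrable (fun x => 2 * (m - (a + b) / 2) * (f x - (a + b) / 2)) μ :=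
    hsub.const_mul _
  have hint : ∫ x, (f x - m) ^ 2 ∂μ
      = (∫ x, (f x - (a + b) / 2) ^ 2 ∂μ) - (m - (a + b) / 2) ^ 2 := by
    calc ∫ x, (f x - m) ^ 2 ∂μ
        = ∫ x, ((f x - (a + b) / 2) ^ 2 - 2 * (m - (a + b) / 2) * (f x - (a + b) / 2)
            + (m - (a + b) / 2) ^ 2) ∂μ := by
          congr 1; funext x; ring
      _ = (∫ x, ((f x - (a + b) / 2) ^ 2 - 2 * (m - (a + b) / 2) * (f x - (a + b) / 2)) ∂μ)
            + ∫ _x, (m - (a + b) / 2) ^ 2 ∂μ := integral_add (hift.sub h1) (integrable_const _)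
      _ = (∫ x, (f x - (a + b) / 2) ^ 2 ∂μ)
            - (∫ x, 2 * (m - (a + b) / 2) * (f x - (a + b) / 2) ∂μ)
            + (m - (a + b) / 2) ^ 2 := by rw [integral_sub hift h1, integral_const]; simp
      _ = (∫ x, (f x - (a + b) / 2) ^ 2 ∂μ)
            - 2 * (m - (a + b) / 2) * (∫ x, (f x - (a + b) / 2) ∂μ)
            + (m - (a + b) / 2) ^ 2 := by rw [integral_const_mul _ _]
      _ = (∫ x, (f x - (a + b) / 2) ^ 2 ∂μ) - (m - (a + b) / 2) ^ 2 := by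
          rw [integral_sub hif (integrable_const _), integral_const]
          simp only [probReal_univ, ENNReal.toReal_one, one_smul, smul_eq_mul, one_mul, ← hm]
          ring
  have hptws : ∫ x, (f x - (a + b) / 2) ^ 2 ∂μ ≤ ((b - a) / 2) ^ 2 := by
    have hb : ∀ᵐ x ∂μ, (f x - (a + b) / 2) ^ 2 ≤ ((b - a) / 2) ^ 2 := by
      filter_upwards [h] with x hx
      have h1' : |f x - (a + b) / 2| ≤ (b - a) / 2 := by
        rw [abs_le]; constructor <;> linarith [hx.1, hx.2]
      calc (f x - (a + b) / 2) ^ 2 = |f x - (a + b) / 2| ^ 2 := (sq_abs _).symm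
        _ ≤ ((b - a) / 2) ^ 2 := pow_le_pow_left₀ (abs_nonneg _) h1' 2
    calc ∫ x, (f x - (a + b) / 2) ^ 2 ∂μ ≤ ∫ _x, ((b - a) / 2) ^ 2 ∂μ :=
          integral_mono_ae hift (integrable_const _) hb
      _ = ((b - a) / 2) ^ 2 := by simp
  rw [hint]
  have := sq_nonneg (m - (a + b) / 2)
  linarith

lemma integral_abs_le_sqrt_integral_sq {α : Type*} [MeasurableSpace α] (μ : Measure α)
    [IsProbabilityMeasure μ] {f : α → ℝ} (hf : Integrable f μ)
    (hf2 : Integrable (fun x => f x ^ 2) μ) :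
    ∫ x, |f x| ∂μ ≤ Real.sqrt (∫ x, f x ^ 2 ∂μ) := by
  set m := ∫ x, |f x| ∂μ with hm
  have hm0 : 0 ≤ m := integral_nonneg fun x => abs_nonneg _
  have habsint : Integrable (fun x => |f x|) μ := hf.abs
  have key : m ^ 2 ≤ ∫ x, f x ^ 2 ∂μ := by
    have h0 : 0 ≤ ∫ x, (|f x| - m) ^ 2 ∂μ := integral_nonneg fun x => sq_nonneg _
    have hcalc : ∫ x, (|f x| - m) ^ 2 ∂μ = (∫ x, f x ^ 2 ∂μ) - m ^ 2 := by
      calc ∫ x, (|f x| - m) ^ 2 ∂μ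
          = ∫ x, ((f x ^ 2 - 2 * m * |f x|) + m ^ 2) ∂μ := by
            congr 1; funext x
            have h5 : |f x| ^ 2 = f x ^ 2 := sq_abs _
            nlinarith [h5]
        _ = (∫ x, (f x ^ 2 - 2 * m * |f x|) ∂μ) + ∫ _x, m ^ 2 ∂μ :=
            integral_add (hf2.sub (habsint.const_mul _)) (integrable_const _)
        _ = (∫ x, f x ^ 2 ∂μ) - 2 * m * (∫ x, |f x| ∂μ) + m ^ 2 := by
            rw [integral_sub hf2 (habsint.const_mul _), integral_const_mul _ _, integral_const]
            simp
        _ = (∫ x, f x ^ 2 ∂μ) - m ^ 2 := by rw [← hm]; ring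
    linarith [h0, hcalc]
  calc m = Real.sqrt (m ^ 2) := (Real.sqrt_sq hm0).symm
    _ ≤ Real.sqrt (∫ x, f x ^ 2 ∂μ) := Real.sqrt_le_sqrt key

lemma myF_mem {d : ℕ} {τ : ℝ} (hτ : 0 < τ) {u j : EuclideanSpace ℝ (Fin d)}
    (hu : ‖u‖ = 1) (hj : ‖j‖ = 1) :
    Real.exp ((inner ℝ u j : ℝ) / τ) ∈ Set.Icc (Real.exp (-(1 / τ))) (Real.exp (1 / τ)) := by
  have h1 : |(inner ℝ u j : ℝ)| ≤ 1 := by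
    have := abs_real_inner_le_norm u j
    rwa [hu, hj, one_mul] at this
  rw [abs_le] at h1
  constructor
  · apply Real.exp_le_exp.mpr
    rw [← neg_div]
    gcongr
    exact h1.1
  · apply Real.exp_le_exp.mpr
    gcongr
    exact h1.2

set_option maxHeartbeats 2000000 in
/-- Theorem 2 of the paper, with the O(M^{-1/2}) term explicit: the
approximation error of the normalized finite-negative InfoNCE loss L̃(M) relative to its
full-distribution limit L̃(∞) = −(1/τ)E[s(U,I)] + E[log g(U)] is at most
e^{2/τ}/M + e^{1/τ}(e^{1/τ} − e^{−1/τ})/(2√M). -/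
theorem infoNCE_finite_negative_approximation_error
    (d : ℕ) (hd : 1 ≤ d) (τ : ℝ) (hτ : 0 < τ)
    {Ω : Type*} [MeasurableSpace Ω] (P : Measure Ω) [IsProbabilityMeasure P]
    (U I : Ω → EuclideanSpace ℝ (Fin d)) (J : ℕ → Ω → EuclideanSpace ℝ (Fin d))
    (hUm : Measurable U) (hIm : Measurable I) (hJm : ∀ n, Measurable (J n))
    (hU : ∀ ω, ‖U ω‖ = 1) (hI : ∀ ω, ‖I ω‖ = 1) (hJ : ∀ n ω, ‖J n ω‖ = 1)
    (ν : Measure (EuclideanSpace ℝ (Fin d))) [IsProbabilityMeasure ν]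
    (hlaw : ∀ n, P.map (J n) = ν)
    (hiid : iIndepFun J P)
    (hindep : IndepFun (fun ω => (U ω, I ω)) (fun ω => (fun n => J n ω)) P)
    (M : ℕ) (hM : 1 ≤ M) :
    |(-(1 / τ) * (∫ ω, (inner ℝ (U ω) (I ω) : ℝ) ∂P)
        + ∫ ω, log (∫ j, exp ((inner ℝ (U ω) j : ℝ) / τ) ∂ν) ∂P)
      - (-(∫ ω, log (exp ((inner ℝ (U ω) (I ω) : ℝ) / τ) /
            (exp ((inner ℝ (U ω) (I ω) : ℝ) / τ)
              + ∑ n ∈ Finset.range M, exp ((inner ℝ (U ω) (J n ω) : ℝ) / τ))) ∂P)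
          - log M)|
    ≤ (1 / M) * exp (2 / τ)
      + exp (1 / τ) * (exp (1 / τ) - exp (-(1 / τ))) / (2 * Real.sqrt M) := by
  have hM0 : (0 : ℝ) < M := by exact_mod_cast Nat.lt_of_lt_of_le Nat.zero_lt_one hM
  set c := Real.exp (1 / τ) with hc
  set e := Real.exp (-(1 / τ)) with he
  have he0 : 0 < e := Real.exp_pos _
  have hc0 : 0 < c := Real.exp_pos _
  have hec : e ≤ c := by
    apply Real.exp_le_exp.mpr
    have h1 : 0 < 1 / τ := by positivity
    linarith
  have hcc : c * c = Real.exp (2 / τ) := by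
    rw [hc, ← Real.exp_add]; congr 1; ring
  have hein : e = c⁻¹ := by rw [he, hc, Real.exp_neg]
  set g : EuclideanSpace ℝ (Fin d) → ℝ :=
    fun u => ∫ j, Real.exp ((inner ℝ u j : ℝ) / τ) ∂ν with hgdef
  set X : ℕ → Ω → ℝ :=
    fun n ω => Real.exp ((inner ℝ (U ω) (J n ω) : ℝ) / τ) with hXdef
  set A : Ω → ℝ := fun ω => Real.exp ((inner ℝ (U ω) (I ω) : ℝ) / τ) with hAdef
  set S : Ω → ℝ := fun ω => ∑ n ∈ Finset.range M, X n ω with hSdef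
  -- measurability basics
  have hSph : MeasurableSet {x : EuclideanSpace ℝ (Fin d) | ‖x‖ = 1} :=
    measurable_norm (measurableSet_singleton 1)
  have hνs : ∀ᵐ j ∂ν, ‖j‖ = 1 := by
    rw [← hlaw 0]
    exact (ae_map_iff (hJm 0).aemeasurable hSph).mpr (Filter.Eventually.of_forall (hJ 0))
  haveI : IsProbabilityMeasure (P.map U) := Measure.isProbabilityMeasure_map hUm.aemeasurable
  have hμs : ∀ᵐ u ∂(P.map U), ‖u‖ = 1 :=
    (ae_map_iff hUm.aemeasurable hSph).mpr (Filter.Eventually.of_forall hU)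
  have hgm : Measurable g :=
    ((Real.measurable_exp.comp
      ((measurable_fst.inner measurable_snd).div_const τ)).stronglyMeasurable.integral_prod_right').measurable
  have hXm : ∀ n, Measurable (X n) := fun n =>
    Real.measurable_exp.comp ((hUm.inner (hJm n)).div_const τ)
  have hAm : Measurable A := Real.measurable_exp.comp ((hUm.inner hIm).div_const τ)
  have hSm : Measurable S := Finset.measurable_sum _ fun n _ => hXm n
  have hgUm : Measurable fun ω => g (U ω) := hgm.comp hUm
  -- bounds
  have hgmem : ∀ u : EuclideanSpace ℝ (Fin d), ‖u‖ = 1 → g u ∈ Set.Icc e c := by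
    intro u hu
    have hm : Measurable fun j : EuclideanSpace ℝ (Fin d) => Real.exp ((inner ℝ u j : ℝ) / τ) :=
      Real.measurable_exp.comp ((measurable_const.inner measurable_id).div_const τ)
    have hint : Integrable (fun j => Real.exp ((inner ℝ u j : ℝ) / τ)) ν := by
      apply myIntegrable hm.aestronglyMeasurable (C := c)
      filter_upwards [hνs] with j hj
      beta_reduce
      rw [abs_of_pos (Real.exp_pos _)]
      exact (myF_mem hτ hu hj).2
    constructor
    · calc e = ∫ _j, e ∂ν := by simp
        _ ≤ g u := integral_mono_ae (integrable_const e) hint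
            (by filter_upwards [hνs] with j hj; exact (myF_mem hτ hu hj).1)
    · calc g u ≤ ∫ _j, c ∂ν := integral_mono_ae hint (integrable_const c)
            (by filter_upwards [hνs] with j hj; exact (myF_mem hτ hu hj).2)
        _ = c := by simp
  have hXmem : ∀ n ω, X n ω ∈ Set.Icc e c := fun n ω => myF_mem hτ (hU ω) (hJ n ω)
  have hAmem : ∀ ω, A ω ∈ Set.Icc e c := fun ω => myF_mem hτ (hU ω) (hI ω)
  have hgUmem : ∀ ω, g (U ω) ∈ Set.Icc e c := fun ω => hgmem _ (hU ω)
  -- laws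
  have hUJ : ∀ n, P.map (fun ω => (U ω, J n ω)) = (P.map U).prod ν := by
    intro n
    have h1 : IndepFun U (J n) P := by
      have h2 := hindep.comp (measurable_fst) (measurable_pi_apply n)
      exact h2
    rw [← hlaw n]
    exact (indepFun_iff_map_prod_eq_prod_map_map hUm.aemeasurable (hJm n).aemeasurable).mp h1
  -- diagonal bound
  have hdiag : ∀ n, ∫ ω, (X n ω - g (U ω)) ^ 2 ∂P ≤ ((c - e) / 2) ^ 2 := by
    intro n
    have hφm : Measurable fun p : EuclideanSpace ℝ (Fin d) × EuclideanSpace ℝ (Fin d) =>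
        (Real.exp ((inner ℝ p.1 p.2 : ℝ) / τ) - g p.1) ^ 2 :=
      ((Real.measurable_exp.comp ((measurable_fst.inner measurable_snd).div_const τ)).sub
        (hgm.comp measurable_fst)).pow_const 2
    have haeprod : ∀ᵐ p ∂((P.map U).prod ν), ‖p.1‖ = 1 ∧ ‖p.2‖ = 1 := by
      refine (Measure.ae_prod_iff_ae_ae
        (p := fun p : EuclideanSpace ℝ (Fin d) × EuclideanSpace ℝ (Fin d) =>
          ‖p.1‖ = 1 ∧ ‖p.2‖ = 1)
        ((hSph.preimage measurable_fst).inter (hSph.preimage measurable_snd))).mpr ?_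
      filter_upwards [hμs] with u hu
      filter_upwards [hνs] with j hj
      exact ⟨hu, hj⟩
    have hφint : Integrable
        (fun p : EuclideanSpace ℝ (Fin d) × EuclideanSpace ℝ (Fin d) =>
          (Real.exp ((inner ℝ p.1 p.2 : ℝ) / τ) - g p.1) ^ 2) ((P.map U).prod ν) := by
      apply myIntegrable hφm.aestronglyMeasurable (C := (c - e) ^ 2)
      filter_upwards [haeprod] with p hp
      beta_reduce
      have h1 := myF_mem hτ hp.1 hp.2
      have h2 := hgmem _ hp.1
      have h3 : |Real.exp ((inner ℝ p.1 p.2 : ℝ) / τ) - g p.1| ≤ c - e := by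
        rw [abs_le]
        constructor <;> [linarith [h1.1, h2.2]; linarith [h1.2, h2.1]]
      rw [abs_of_nonneg (sq_nonneg _)]
      calc (Real.exp ((inner ℝ p.1 p.2 : ℝ) / τ) - g p.1) ^ 2
          = |Real.exp ((inner ℝ p.1 p.2 : ℝ) / τ) - g p.1| ^ 2 := (sq_abs _).symm
        _ ≤ (c - e) ^ 2 := pow_le_pow_left₀ (abs_nonneg _) h3 2
    have hmap : ∫ ω, (X n ω - g (U ω)) ^ 2 ∂P
        = ∫ p, (Real.exp ((inner ℝ p.1 p.2 : ℝ) / τ) - g p.1) ^ 2 ∂((P.map U).prod ν) := by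
      rw [← hUJ n]
      exact (integral_map (hUm.prodMk (hJm n)).aemeasurable
        (by rw [hUJ n]; exact hφm.aestronglyMeasurable)).symm
    rw [hmap,
      integral_prod _ hφint]
    have hin : ∀ᵐ u ∂(P.map U),
        (∫ j, (Real.exp ((inner ℝ u j : ℝ) / τ) - g u) ^ 2 ∂ν) ≤ ((c - e) / 2) ^ 2 := by
      filter_upwards [hμs] with u hu
      have hfm : AEStronglyMeasurable (fun j : EuclideanSpace ℝ (Fin d) =>
          Real.exp ((inner ℝ u j : ℝ) / τ)) ν :=
        (Real.measurable_exp.comp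
          ((measurable_const.inner measurable_id).div_const τ)).aestronglyMeasurable
      exact popoviciu ν hfm (by filter_upwards [hνs] with j hj; exact myF_mem hτ hu hj)
    have hnn : Integrable (fun u => ∫ j,
        (Real.exp ((inner ℝ u j : ℝ) / τ) - g u) ^ 2 ∂ν) (P.map U) := hφint.integral_prod_left
    calc ∫ u, ∫ j, (Real.exp ((inner ℝ u j : ℝ) / τ) - g u) ^ 2 ∂ν ∂(P.map U)
        ≤ ∫ _u, ((c - e) / 2) ^ 2 ∂(P.map U) := integral_mono_ae hnn (integrable_const _) hin
      _ = ((c - e) / 2) ^ 2 := by simp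
  -- off-diagonal vanishing
  have hoff : ∀ m n : ℕ, m ≠ n →
      ∫ ω, (X m ω - g (U ω)) * (X n ω - g (U ω)) ∂P = 0 := by
    intro m n hmn
    have hpairlaw : P.map (fun ω => (J m ω, J n ω)) = ν.prod ν := by
      have h1 : IndepFun (J m) (J n) P := hiid.indepFun hmn
      have h2 := (indepFun_iff_map_prod_eq_prod_map_map (hJm m).aemeasurable
        (hJm n).aemeasurable).mp h1
      rw [h2, hlaw m, hlaw n]
    have hUJJ : P.map (fun ω => (U ω, (J m ω, J n ω))) = (P.map U).prod (ν.prod ν) := by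
      have h1 : IndepFun U (fun ω => (J m ω, J n ω)) P := by
        have h2 := hindep.comp measurable_fst
          ((measurable_pi_apply m).prodMk (measurable_pi_apply n))
        exact h2
      have h3 := (indepFun_iff_map_prod_eq_prod_map_map hUm.aemeasurable
        ((hJm m).prodMk (hJm n)).aemeasurable).mp h1
      rw [h3, hpairlaw]
    have hψm : Measurable fun p :
        EuclideanSpace ℝ (Fin d) × (EuclideanSpace ℝ (Fin d) × EuclideanSpace ℝ (Fin d)) =>
        (Real.exp ((inner ℝ p.1 p.2.1 : ℝ) / τ) - g p.1)
          * (Real.exp ((inner ℝ p.1 p.2.2 : ℝ) / τ) - g p.1) :=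
      ((Real.measurable_exp.comp
          ((measurable_fst.inner (measurable_fst.comp measurable_snd)).div_const τ)).sub
        (hgm.comp measurable_fst)).mul
      ((Real.measurable_exp.comp
          ((measurable_fst.inner (measurable_snd.comp measurable_snd)).div_const τ)).sub
        (hgm.comp measurable_fst))
    have hννs : ∀ᵐ q ∂(ν.prod ν), ‖q.1‖ = 1 ∧ ‖q.2‖ = 1 := by
      refine (Measure.ae_prod_iff_ae_ae
        (p := fun q : EuclideanSpace ℝ (Fin d) × EuclideanSpace ℝ (Fin d) =>
          ‖q.1‖ = 1 ∧ ‖q.2‖ = 1)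
        ((hSph.preimage measurable_fst).inter (hSph.preimage measurable_snd))).mpr ?_
      filter_upwards [hνs] with x hx
      filter_upwards [hνs] with y hy
      exact ⟨hx, hy⟩
    have haeprod : ∀ᵐ p ∂((P.map U).prod (ν.prod ν)),
        ‖p.1‖ = 1 ∧ (‖p.2.1‖ = 1 ∧ ‖p.2.2‖ = 1) := by
      refine (Measure.ae_prod_iff_ae_ae
        (p := fun p : EuclideanSpace ℝ (Fin d) ×
            (EuclideanSpace ℝ (Fin d) × EuclideanSpace ℝ (Fin d)) =>
          ‖p.1‖ = 1 ∧ (‖p.2.1‖ = 1 ∧ ‖p.2.2‖ = 1))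
        ((hSph.preimage measurable_fst).inter
          (((hSph.preimage measurable_fst).inter
            (hSph.preimage measurable_snd)).preimage measurable_snd))).mpr ?_
      filter_upwards [hμs] with u hu
      filter_upwards [hννs] with q hq
      exact ⟨hu, hq⟩
    have hsubbound : ∀ (u j : EuclideanSpace ℝ (Fin d)), ‖u‖ = 1 → ‖j‖ = 1 →
        |Real.exp ((inner ℝ u j : ℝ) / τ) - g u| ≤ c - e := by
      intro u j hu hj
      have h1 := myF_mem hτ hu hj
      have h2 := hgmem _ hu
      rw [abs_le]
      constructor <;> [linarith [h1.1, h2.2]; linarith [h1.2, h2.1]]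
    have hψint : Integrable (fun p :
        EuclideanSpace ℝ (Fin d) × (EuclideanSpace ℝ (Fin d) × EuclideanSpace ℝ (Fin d)) =>
        (Real.exp ((inner ℝ p.1 p.2.1 : ℝ) / τ) - g p.1)
          * (Real.exp ((inner ℝ p.1 p.2.2 : ℝ) / τ) - g p.1)) ((P.map U).prod (ν.prod ν)) := by
      apply myIntegrable hψm.aestronglyMeasurable (C := (c - e) * (c - e))
      filter_upwards [haeprod] with p hp
      beta_reduce
      rw [abs_mul]
      have hce : 0 ≤ c - e := by linarith
      exact mul_le_mul (hsubbound _ _ hp.1 hp.2.1) (hsubbound _ _ hp.1 hp.2.2)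
        (abs_nonneg _) hce
    have hmap : ∫ ω, (X m ω - g (U ω)) * (X n ω - g (U ω)) ∂P
        = ∫ p, (Real.exp ((inner ℝ p.1 p.2.1 : ℝ) / τ) - g p.1)
            * (Real.exp ((inner ℝ p.1 p.2.2 : ℝ) / τ) - g p.1) ∂((P.map U).prod (ν.prod ν)) := by
      rw [← hUJJ]
      exact (integral_map (hUm.prodMk ((hJm m).prodMk (hJm n))).aemeasurable
        (by rw [hUJJ]; exact hψm.aestronglyMeasurable)).symm
    rw [hmap, integral_prod _ hψint]
    apply integral_eq_zero_of_ae
    filter_upwards [hμs] with u hu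
    have hfm : Measurable (fun j : EuclideanSpace ℝ (Fin d) =>
        Real.exp ((inner ℝ u j : ℝ) / τ) - g u) :=
      (Real.measurable_exp.comp ((measurable_const.inner measurable_id).div_const τ)).sub
        measurable_const
    have hfint : Integrable (fun j : EuclideanSpace ℝ (Fin d) =>
        Real.exp ((inner ℝ u j : ℝ) / τ) - g u) ν := by
      apply myIntegrable hfm.aestronglyMeasurable (C := c - e)
      filter_upwards [hνs] with j hj
      exact hsubbound _ _ hu hj
    have hzero : ∫ j, (Real.exp ((inner ℝ u j : ℝ) / τ) - g u) ∂ν = 0 := by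
      have hexpm : Measurable (fun j : EuclideanSpace ℝ (Fin d) =>
          Real.exp ((inner ℝ u j : ℝ) / τ)) :=
        Real.measurable_exp.comp ((measurable_const.inner measurable_id).div_const τ)
      have hexpint : Integrable (fun j : EuclideanSpace ℝ (Fin d) =>
          Real.exp ((inner ℝ u j : ℝ) / τ)) ν := by
        apply myIntegrable hexpm.aestronglyMeasurable (C := c)
        filter_upwards [hνs] with j hj
        beta_reduce
        rw [abs_of_pos (Real.exp_pos _)]
        exact (myF_mem hτ hu hj).2
      rw [integral_sub hexpint (integrable_const _), integral_const]
      have hgu : g u = ∫ j, Real.exp ((inner ℝ u j : ℝ) / τ) ∂ν := rfl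
      rw [hgu]
      simp
    have hprodm : Measurable (fun q : EuclideanSpace ℝ (Fin d) × EuclideanSpace ℝ (Fin d) =>
        (Real.exp ((inner ℝ u q.1 : ℝ) / τ) - g u)
          * (Real.exp ((inner ℝ u q.2 : ℝ) / τ) - g u)) :=
      ((Real.measurable_exp.comp
          ((measurable_const.inner measurable_fst).div_const τ)).sub measurable_const).mul
        ((Real.measurable_exp.comp
          ((measurable_const.inner measurable_snd).div_const τ)).sub measurable_const)
    have hprodint : Integrable (fun q : EuclideanSpace ℝ (Fin d) × EuclideanSpace ℝ (Fin d) =>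
        (Real.exp ((inner ℝ u q.1 : ℝ) / τ) - g u)
          * (Real.exp ((inner ℝ u q.2 : ℝ) / τ) - g u)) (ν.prod ν) := by
      apply myIntegrable hprodm.aestronglyMeasurable (C := (c - e) * (c - e))
      filter_upwards [hννs] with q hq
      beta_reduce
      rw [abs_mul]
      have hce : 0 ≤ c - e := by linarith
      exact mul_le_mul (hsubbound _ _ hu hq.1) (hsubbound _ _ hu hq.2) (abs_nonneg _) hce
    calc ∫ q, (Real.exp ((inner ℝ u q.1 : ℝ) / τ) - g u)
            * (Real.exp ((inner ℝ u q.2 : ℝ) / τ) - g u) ∂(ν.prod ν)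
        = ∫ x, ∫ y, (Real.exp ((inner ℝ u x : ℝ) / τ) - g u)
            * (Real.exp ((inner ℝ u y : ℝ) / τ) - g u) ∂ν ∂ν := integral_prod _ hprodint
      _ = ∫ x, (Real.exp ((inner ℝ u x : ℝ) / τ) - g u)
            * ∫ y, (Real.exp ((inner ℝ u y : ℝ) / τ) - g u) ∂ν ∂ν := by
          congr 1; funext x; exact integral_const_mul _ _
      _ = 0 := by rw [hzero]; simp
  -- variance bound for the empirical mean
  have hZZint : ∀ m n : ℕ, Integrable
      (fun ω => (X m ω - g (U ω)) * (X n ω - g (U ω))) P := by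
    intro m n
    apply myIntegrable (((hXm m).sub hgUm).mul ((hXm n).sub hgUm)).aestronglyMeasurable
      (C := (c - e) * (c - e))
    apply Filter.Eventually.of_forall
    intro ω
    beta_reduce
    simp only [Pi.mul_apply, Pi.sub_apply]
    rw [abs_mul]
    have hce : 0 ≤ c - e := by linarith
    have hb : ∀ k : ℕ, |X k ω - g (U ω)| ≤ c - e := by
      intro k
      have h1 := hXmem k ω
      have h2 := hgUmem ω
      rw [abs_le]
      constructor <;> [linarith [h1.1, h2.2]; linarith [h1.2, h2.1]]
    exact mul_le_mul (hb m) (hb n) (abs_nonneg _) hce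
  have hvar : ∫ ω, (S ω / M - g (U ω)) ^ 2 ∂P ≤ ((c - e) / 2) ^ 2 / M := by
    have hptw : ∀ ω, (S ω / M - g (U ω)) ^ 2
        = (∑ m ∈ Finset.range M, ∑ n ∈ Finset.range M,
            (X m ω - g (U ω)) * (X n ω - g (U ω))) / (M : ℝ) ^ 2 := by
      intro ω
      have h1 : S ω / M - g (U ω) = (∑ n ∈ Finset.range M, (X n ω - g (U ω))) / M := by
        rw [Finset.sum_sub_distrib, Finset.sum_const, Finset.card_range, hSdef]
        simp only [nsmul_eq_mul]
        field_simp
      rw [h1, div_pow, sq, Finset.sum_mul_sum]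
    calc ∫ ω, (S ω / M - g (U ω)) ^ 2 ∂P
        = ∫ ω, (∑ m ∈ Finset.range M, ∑ n ∈ Finset.range M,
            (X m ω - g (U ω)) * (X n ω - g (U ω))) / (M : ℝ) ^ 2 ∂P :=
          integral_congr_ae (Filter.Eventually.of_forall hptw)
      _ = (∑ m ∈ Finset.range M, ∑ n ∈ Finset.range M,
            ∫ ω, (X m ω - g (U ω)) * (X n ω - g (U ω)) ∂P) / (M : ℝ) ^ 2 := by
          rw [integral_div]
          congr 1
          rw [integral_finset_sum _ (fun m _ => integrable_finset_sum _ (fun n _ => hZZint m n))]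
          exact Finset.sum_congr rfl fun m _ => integral_finset_sum _ fun n _ => hZZint m n
      _ ≤ ((M : ℝ) * ((c - e) / 2) ^ 2) / (M : ℝ) ^ 2 := by
          gcongr
          calc ∑ m ∈ Finset.range M, ∑ n ∈ Finset.range M,
                ∫ ω, (X m ω - g (U ω)) * (X n ω - g (U ω)) ∂P
              ≤ ∑ _m ∈ Finset.range M, ((c - e) / 2) ^ 2 := by
                apply Finset.sum_le_sum
                intro m hm
                rw [Finset.sum_eq_single m (fun n _ hne => hoff m n (Ne.symm hne))
                  (fun hmem => (hmem hm).elim)]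
                calc ∫ ω, (X m ω - g (U ω)) * (X m ω - g (U ω)) ∂P
                    = ∫ ω, (X m ω - g (U ω)) ^ 2 ∂P := by
                      apply integral_congr_ae
                      apply Filter.Eventually.of_forall
                      intro ω
                      beta_reduce
                      rw [sq]
                  _ ≤ ((c - e) / 2) ^ 2 := hdiag m
            _ = (M : ℝ) * ((c - e) / 2) ^ 2 := by
                rw [Finset.sum_const, Finset.card_range, nsmul_eq_mul]
      _ = ((c - e) / 2) ^ 2 / M := by
          rw [show ((M : ℝ)) ^ 2 = (M : ℝ) * (M : ℝ) from sq (M:ℝ) ▸ rfl]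
          field_simp
  -- L¹ bound
  have hDbarm : Measurable fun ω => S ω / M - g (U ω) := (hSm.div_const _).sub hgUm
  have hDbarb : ∀ ω, |S ω / M - g (U ω)| ≤ c - e := by
    intro ω
    have hSmem : S ω / M ∈ Set.Icc e c := by
      constructor
      · rw [le_div_iff₀ hM0]
        calc e * M = ∑ _n ∈ Finset.range M, e := by
              rw [Finset.sum_const, Finset.card_range, nsmul_eq_mul]; ring
          _ ≤ S ω := Finset.sum_le_sum fun n _ => (hXmem n ω).1
      · rw [div_le_iff₀ hM0]
        calc S ω ≤ ∑ _n ∈ Finset.range M, c := Finset.sum_le_sum fun n _ => (hXmem n ω).2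
          _ = c * M := by rw [Finset.sum_const, Finset.card_range, nsmul_eq_mul]; ring
    have h2 := hgUmem ω
    rw [abs_le]
    constructor <;> [linarith [hSmem.1, h2.2]; linarith [hSmem.2, h2.1]]
  have hDbarint : Integrable (fun ω => S ω / M - g (U ω)) P :=
    myIntegrable hDbarm.aestronglyMeasurable (Filter.Eventually.of_forall hDbarb)
  have hDbar2int : Integrable (fun ω => (S ω / M - g (U ω)) ^ 2) P := by
    apply myIntegrable (hDbarm.pow_const 2).aestronglyMeasurable (C := (c - e) ^ 2)
    apply Filter.Eventually.of_forall
    intro ω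
    beta_reduce
    rw [abs_of_nonneg (sq_nonneg _)]
    calc (S ω / M - g (U ω)) ^ 2 = |S ω / M - g (U ω)| ^ 2 := (sq_abs _).symm
      _ ≤ (c - e) ^ 2 := pow_le_pow_left₀ (abs_nonneg _) (hDbarb ω) 2
  have hsqrtM : 0 < Real.sqrt M := Real.sqrt_pos.mpr hM0
  have hL1 : ∫ ω, |S ω / M - g (U ω)| ∂P ≤ (c - e) / (2 * Real.sqrt M) := by
    calc ∫ ω, |S ω / M - g (U ω)| ∂P
        ≤ Real.sqrt (∫ ω, (S ω / M - g (U ω)) ^ 2 ∂P) :=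
          integral_abs_le_sqrt_integral_sq P hDbarint hDbar2int
      _ ≤ Real.sqrt (((c - e) / 2) ^ 2 / M) := Real.sqrt_le_sqrt hvar
      _ = (c - e) / (2 * Real.sqrt M) := by
          rw [Real.sqrt_div (sq_nonneg _), Real.sqrt_sq (by linarith : (0:ℝ) ≤ (c - e) / 2),
            div_div]
  -- pointwise deterministic bound
  have hT0 : ∀ ω, 0 < A ω + S ω := by
    intro ω
    have h1 : 0 < A ω := Real.exp_pos _
    have h2 : 0 ≤ S ω := Finset.sum_nonneg fun n _ => (Real.exp_pos _).le
    linarith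
  have hq : ∀ ω, e ≤ (A ω + S ω) / M := by
    intro ω
    rw [le_div_iff₀ hM0]
    have h1 : e ≤ A ω := (hAmem ω).1
    have h2 : e * M ≤ S ω := by
      calc e * M = ∑ _n ∈ Finset.range M, e := by
            rw [Finset.sum_const, Finset.card_range, nsmul_eq_mul]; ring
        _ ≤ S ω := Finset.sum_le_sum fun n _ => (hXmem n ω).1
    have : (0:ℝ) < e := he0
    nlinarith
  have hDptw : ∀ ω, |Real.log (g (U ω)) - Real.log ((A ω + S ω) / M)|
      ≤ Real.exp (2 / τ) / M + c * |S ω / M - g (U ω)| := by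
    intro ω
    have h1 := abs_log_sub_log_le he0 (hgUmem ω).1 (hq ω)
    have h2 : |g (U ω) - (A ω + S ω) / M| ≤ c / M + |S ω / M - g (U ω)| := by
      have heq : g (U ω) - (A ω + S ω) / M = -(A ω / M + (S ω / M - g (U ω))) := by
        field_simp
        ring
      rw [heq, abs_neg]
      calc |A ω / M + (S ω / M - g (U ω))| ≤ |A ω / M| + |S ω / M - g (U ω)| := abs_add_le _ _
        _ ≤ c / M + |S ω / M - g (U ω)| := by
            gcongr
            rw [abs_of_pos (by positivity : (0:ℝ) < A ω / M)]
            gcongr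
            exact (hAmem ω).2
    calc |Real.log (g (U ω)) - Real.log ((A ω + S ω) / M)|
        ≤ |g (U ω) - (A ω + S ω) / M| / e := h1
      _ ≤ (c / M + |S ω / M - g (U ω)|) / e := by gcongr
      _ = c * (c / M + |S ω / M - g (U ω)|) := by
          rw [hein, div_eq_mul_inv, inv_inv]; ring
      _ = c * c / M + c * |S ω / M - g (U ω)| := by ring
      _ = Real.exp (2 / τ) / M + c * |S ω / M - g (U ω)| := by rw [hcc]
  -- integrability of log terms
  have hloggU : Integrable (fun ω => Real.log (g (U ω))) P := by
    apply myIntegrable (Real.measurable_log.comp hgUm).aestronglyMeasurable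
      (C := max |Real.log e| |Real.log c|)
    apply Filter.Eventually.of_forall
    intro ω
    have h1 := hgUmem ω
    exact abs_le_max_abs_abs (Real.log_le_log he0 h1.1) (Real.log_le_log (lt_of_lt_of_le he0 h1.1) h1.2)
  have hlogT : Integrable (fun ω => Real.log (A ω + S ω)) P := by
    apply myIntegrable (Real.measurable_log.comp (hAm.add hSm)).aestronglyMeasurable
      (C := max |Real.log e| |Real.log (c + M * c)|)
    apply Filter.Eventually.of_forall
    intro ω
    have hlb : e ≤ A ω + S ω := by
      have h1 : 0 ≤ S ω := Finset.sum_nonneg fun n _ => (Real.exp_pos _).le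
      have h2 := (hAmem ω).1
      linarith
    have hub : A ω + S ω ≤ c + M * c := by
      have h1 : S ω ≤ M * c := by
        calc S ω ≤ ∑ _n ∈ Finset.range M, c := Finset.sum_le_sum fun n _ => (hXmem n ω).2
          _ = M * c := by rw [Finset.sum_const, Finset.card_range, nsmul_eq_mul]
      have h2 := (hAmem ω).2
      linarith
    exact abs_le_max_abs_abs (Real.log_le_log he0 hlb)
      (Real.log_le_log (lt_of_lt_of_le he0 hlb) hub)
  have hinner_int : Integrable (fun ω => (inner ℝ (U ω) (I ω) : ℝ)) P := by
    apply myIntegrable (hUm.inner hIm).aestronglyMeasurable (C := 1)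
    apply Filter.Eventually.of_forall
    intro ω
    have := abs_real_inner_le_norm (U ω) (I ω)
    rwa [hU ω, hI ω, one_mul] at this
  -- the loss identity
  have hfrac : ∀ ω, Real.log (A ω / (A ω + S ω))
      = (inner ℝ (U ω) (I ω) : ℝ) / τ - Real.log (A ω + S ω) := by
    intro ω
    rw [Real.log_div (Real.exp_pos _).ne' (hT0 ω).ne']
    rw [hAdef]
    rw [Real.log_exp]
  have hIfrac : ∫ ω, Real.log (A ω / (A ω + S ω)) ∂P
      = (∫ ω, (inner ℝ (U ω) (I ω) : ℝ) ∂P) / τ - ∫ ω, Real.log (A ω + S ω) ∂P := by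
    rw [integral_congr_ae (Filter.Eventually.of_forall hfrac),
      integral_sub (hinner_int.div_const τ) hlogT, integral_div]
  have hDint : Integrable (fun ω => Real.log (g (U ω)) - Real.log ((A ω + S ω) / M)) P := by
    have hm : Measurable fun ω => Real.log (g (U ω)) - Real.log ((A ω + S ω) / M) :=
      (Real.measurable_log.comp hgUm).sub
        (Real.measurable_log.comp ((hAm.add hSm).div_const _))
    apply myIntegrable hm.aestronglyMeasurable
      (C := Real.exp (2 / τ) / M + c * (c - e))
    apply Filter.Eventually.of_forall
    intro ω
    calc |Real.log (g (U ω)) - Real.log ((A ω + S ω) / M)|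
        ≤ Real.exp (2 / τ) / M + c * |S ω / M - g (U ω)| := hDptw ω
      _ ≤ Real.exp (2 / τ) / M + c * (c - e) := by
          gcongr
          exact hDbarb ω
  have hDsplit : ∫ ω, (Real.log (g (U ω)) - Real.log ((A ω + S ω) / M)) ∂P
      = (∫ ω, Real.log (g (U ω)) ∂P) - (∫ ω, Real.log (A ω + S ω) ∂P) + Real.log M := by
    have hptw : ∀ ω, Real.log (g (U ω)) - Real.log ((A ω + S ω) / M)
        = (Real.log (g (U ω)) - Real.log (A ω + S ω)) + Real.log M := by
      intro ω
      rw [Real.log_div (hT0 ω).ne' (ne_of_gt hM0)]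
      ring
    have h1 : Integrable (fun ω => Real.log (g (U ω)) - Real.log (A ω + S ω)) P :=
      hloggU.sub hlogT
    rw [integral_congr_ae (Filter.Eventually.of_forall hptw),
      integral_add h1 (integrable_const _),
      integral_sub hloggU hlogT, integral_const]
    simp
  -- final assembly
  show |(-(1 / τ) * (∫ ω, (inner ℝ (U ω) (I ω) : ℝ) ∂P) + ∫ ω, Real.log (g (U ω)) ∂P)
      - (-(∫ ω, Real.log (A ω / (A ω + S ω)) ∂P) - Real.log M)|
    ≤ (1 / M) * Real.exp (2 / τ) + c * (c - e) / (2 * Real.sqrt M)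
  have hEq : (-(1 / τ) * (∫ ω, (inner ℝ (U ω) (I ω) : ℝ) ∂P) + ∫ ω, Real.log (g (U ω)) ∂P)
      - (-(∫ ω, Real.log (A ω / (A ω + S ω)) ∂P) - Real.log M)
      = ∫ ω, (Real.log (g (U ω)) - Real.log ((A ω + S ω) / M)) ∂P := by
    rw [hIfrac, hDsplit]
    ring
  rw [hEq]
  calc |∫ ω, (Real.log (g (U ω)) - Real.log ((A ω + S ω) / M)) ∂P|
      ≤ ∫ ω, |Real.log (g (U ω)) - Real.log ((A ω + S ω) / M)| ∂P := by
        simpa [Real.norm_eq_abs] using norm_integral_le_integral_norm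
          (fun ω => Real.log (g (U ω)) - Real.log ((A ω + S ω) / M)) (μ := P)
    _ ≤ ∫ ω, (Real.exp (2 / τ) / M + c * |S ω / M - g (U ω)|) ∂P := by
        apply integral_mono_ae hDint.abs
          ((integrable_const _).add (hDbarint.abs.const_mul c))
        exact Filter.Eventually.of_forall hDptw
    _ = Real.exp (2 / τ) / M + c * ∫ ω, |S ω / M - g (U ω)| ∂P := by
        rw [integral_add (integrable_const _) (hDbarint.abs.const_mul c), integral_const,
          integral_const_mul]
        simp
    _ ≤ Real.exp (2 / τ) / M + c * ((c - e) / (2 * Real.sqrt M)) := by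
        gcongr
    _ = (1 / M) * Real.exp (2 / τ) + c * (c - e) / (2 * Real.sqrt M) := by ring
end
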